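/- Let m ≥ 1, let U₁, …, U_m be real orthogonal n×n matrices, and let V₁, …, V_m be skew-symmetric real n×n matrices. Define the positively oriented quantities U⁺ = U₁·U₂·⋯·U_m and W⁺ = (1/m)·Σ_{i=1}^{m} P_i·V_i·P_iᵀ, where P₁ = 1 and P_i = U₁·⋯·U_{i−1} for i ≥ 2; and the negatively oriented quantities U⁻ = (U₁·⋯·U_m)ᵀ and W⁻ = (1/m)·( Q₁·V₁ᵀ·Q₁ᵀ + Σ_{i=2}^{m} Q_i·V_{m−i+2}ᵀ·Q_iᵀ ), where Q₁ = 1 and Q_i = U_mᵀ·U_{m−1}ᵀ·⋯·U_{m−i+2}ᵀ for i ≥ 2. Then Tr(U⁺·W⁺) = Tr(U⁻·W⁻); that is, the plaquette action −(1/2)Tr(U^{h}_{αα}·W^{h}(α)) is independent of the chosen orientation of the boundary of the dual Voronoï plaquette. -/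

import Mathlib

open Matrix

private lemma prod_orth {n : ℕ} (L : List (Matrix (Fin n) (Fin n) ℝ))
    (h : ∀ B ∈ L, B * Bᵀ = 1) : L.prod * L.prodᵀ = 1 := by
  induction L with
  | nil => simp
  | cons a l ih =>
    have h1 := h a (by simp)
    have h2 : l.prod * l.prodᵀ = 1 := ih (fun B hB => h B (by simp [hB]))
    simp only [List.prod_cons, transpose_mul]
    calc a * l.prod * (l.prodᵀ * aᵀ)
        = a * (l.prod * l.prodᵀ) * aᵀ := by
          simp only [Matrix.mul_assoc]
      _ = 1 := by rw [h2, Matrix.mul_one, h1]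

private lemma trace_key {n : ℕ} (P D W : Matrix (Fin n) (Fin n) ℝ)
    (hP : Pᵀ * P = 1) (hD : D * Dᵀ = 1) :
    ((P * D) * (P * W * Pᵀ)).trace = ((P * D)ᵀ * (Dᵀ * Wᵀ * D)).trace := by
  have lhs : (P * D) * (P * W * Pᵀ) = (P * D * P * W) * Pᵀ := by
    simp only [Matrix.mul_assoc]
  have rhs : (P * D)ᵀ * (Dᵀ * Wᵀ * D) = (Dᵀ * W * D * (P * D))ᵀ := by
    simp [Matrix.mul_assoc]
  rw [lhs, rhs, Matrix.trace_transpose,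
    Matrix.trace_mul_comm (P * D * P * W) Pᵀ,
    show Pᵀ * (P * D * P * W) = (Pᵀ * P) * (D * (P * W)) by simp only [Matrix.mul_assoc],
    hP, Matrix.one_mul,
    show Dᵀ * W * D * (P * D) = (Dᵀ * W * D * P) * D by simp only [Matrix.mul_assoc],
    Matrix.trace_mul_comm (Dᵀ * W * D * P) D,
    show D * (Dᵀ * W * D * P) = (D * Dᵀ) * (W * (D * P)) by simp only [Matrix.mul_assoc],
    hD, Matrix.one_mul, Matrix.trace_mul_comm W (D * P)]
  simp [Matrix.mul_assoc]

/-- **Orientation independence of the plaquette action.**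
Let `U 0, …, U (m-1)` be orthogonal matrices (the connection matrices along one
orientation of the closed dual Voronoï loop around a hinge) and
`V 0, …, V (m-1)` skew-symmetric matrices (the oriented hinge bivectors in the
frames of the simplices of the loop).  With the positively oriented holonomy
`U⁺ = U 0 ⋯ U (m-1)`, the averaged transported bivector
`W⁺ = (1/m) Σᵢ Pᵢ·Vᵢ·Pᵢᵀ` where `Pᵢ = U 0 ⋯ U (i-1)` (`P₀ = 1`), and the
negatively oriented quantities `U⁻ = (U 0 ⋯ U (m-1))ᵀ`,
`W⁻ = (1/m)(Q₀·V₀ᵀ·Q₀ᵀ + Σ_{k≥1} Q_k·V_{m-k}ᵀ·Q_kᵀ)` where `Q₀ = 1` and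
`Q_k = (U (m-k) ⋯ U (m-1))ᵀ`, one has `Tr(U⁺·W⁺) = Tr(U⁻·W⁻)` : the plaquette
action is independent of the chosen orientation of the plaquette boundary. -/
theorem plaquette_action_orientation_independent
    (n m : ℕ) (hm : 1 ≤ m)
    (U V : Fin m → Matrix (Fin n) (Fin n) ℝ)
    (hU : ∀ i, U i * (U i)ᵀ = 1)
    (hV : ∀ i, (V i)ᵀ = -(V i)) :
    (((List.ofFn U).prod) *
        ((1 / (m : ℝ)) •
          ∑ i : Fin m,
            ((List.ofFn U).take i.val).prod * V i *
              (((List.ofFn U).take i.val).prod)ᵀ)).trace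
      =
    ((((List.ofFn U).prod)ᵀ) *
        ((1 / (m : ℝ)) •
          ∑ k : Fin m,
            (((List.ofFn U).drop (m - k.val)).prod)ᵀ *
              (V ⟨(m - k.val) % m, Nat.mod_lt _ (by omega)⟩)ᵀ *
              (((List.ofFn U).drop (m - k.val)).prod))).trace := by
  have hmem : ∀ B ∈ List.ofFn U, B * Bᵀ = 1 := by
    intro B hB
    obtain ⟨j, rfl⟩ := List.mem_ofFn.1 hB
    exact hU j
  simp only [mul_smul_comm, Matrix.trace_smul, Matrix.mul_sum,
    Matrix.trace_sum, smul_eq_mul]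
  congr 1
  have hσlt : ∀ k : Fin m, (m - k.val) % m < m := fun k => Nat.mod_lt _ (by omega)
  set σ : Fin m → Fin m := fun k => ⟨(m - k.val) % m, hσlt k⟩ with hσdef
  have hkey : ∀ k : Fin m, (m - (m - k.val) % m) % m = k.val := by
    intro k
    have hk := k.isLt
    rcases Nat.eq_zero_or_pos k.val with h | h
    · rw [h, Nat.sub_zero, Nat.mod_self, Nat.sub_zero, Nat.mod_self]
    · have h1 : (m - k.val) % m = m - k.val := Nat.mod_eq_of_lt (by omega)
      rw [h1, show m - (m - k.val) = k.val by omega, Nat.mod_eq_of_lt hk]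
  have hinv : Function.Involutive σ := fun k => Fin.ext (hkey k)
  refine Fintype.sum_equiv hinv.toPerm _ _ ?_
  intro i
  simp only [Function.Involutive.coe_toPerm, hσdef]
  have hlt := i.isLt
  by_cases h0 : i.val = 0
  · have hdropnil : (List.ofFn U).drop m = [] :=
      List.drop_eq_nil_of_le (by simp)
    simp only [h0, Nat.sub_zero, Nat.mod_self, hdropnil]
    have hVi : ∀ (h : 0 < m), (⟨0, h⟩ : Fin m) = i := fun h => Fin.ext h0.symm
    rw [hVi]
    simp only [List.take_zero, List.prod_nil, Matrix.one_mul, Matrix.mul_one,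
      transpose_one]
    rw [← Matrix.trace_transpose (((List.ofFn U).prod)ᵀ * (V i)ᵀ)]
    simp only [transpose_mul, transpose_transpose]
    rw [Matrix.trace_mul_comm]
  · have h1 : (m - i.val) % m = m - i.val := Nat.mod_eq_of_lt (by omega)
    have h2 : m - (m - i.val) = i.val := by omega
    simp only [h1, h2, Nat.mod_eq_of_lt hlt, Fin.eta]
    set P := ((List.ofFn U).take i.val).prod with hPdef
    set D := ((List.ofFn U).drop i.val).prod with hDdef
    have hA : (List.ofFn U).prod = P * D := (List.prod_take_mul_prod_drop _ _).symm
    have hDorth : D * Dᵀ = 1 :=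
      prod_orth _ (fun B hB => hmem B (List.drop_subset _ _ hB))
    have hPorth : Pᵀ * P = 1 := by
      rw [mul_eq_one_comm]
      exact prod_orth _ (fun B hB => hmem B (List.take_subset _ _ hB))
    rw [hA]
    exact trace_key P D (V i) hPorth hDorth
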